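/- Let f: ℝⁿ → ℝ be differentiable with L-Lipschitz gradient, let g: ℝⁿ → ℝ be convex, and let δ ∈ (0, 1/L). If v = prox_{δg}(x − δ∇f(x)), then (f+g)(x) − (f+g)(v) ≥ (1/(2δ) − L/2)‖v − x‖². -/

import Mathlib

open InnerProductSpace

/-- Descent lemma. -/
lemma descent_lemma' {n : ℕ}
    (f : EuclideanSpace ℝ (Fin n) → ℝ)
    (f' : EuclideanSpace ℝ (Fin n) → EuclideanSpace ℝ (Fin n))
    (hf : ∀ x, HasGradientAt f (f' x) x)
    (L : ℝ) (hL : 0 < L) (hLip : ∀ a b, ‖f' a - f' b‖ ≤ L * ‖a - b‖)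
    (x v : EuclideanSpace ℝ (Fin n)) :
    f v ≤ f x + ⟪f' x, v - x⟫_ℝ + L / 2 * ‖v - x‖ ^ 2 := by
  set d := v - x with hd
  have hderiv : ∀ t : ℝ, HasDerivAt (fun t : ℝ => f (x + t • d))
      (⟪f' (x + t • d), d⟫_ℝ) t := by
    intro t
    have hc : HasDerivAt (fun t : ℝ => x + t • d) d t := by
      simpa using (hasDerivAt_id t).smul_const d |>.const_add x
    have hF := (hf (x + t • d)).hasFDerivAt.comp_hasDerivAt t hc
    exact hF
  set h : ℝ → ℝ := fun t => f (x + t • d) - t * ⟪f' x, d⟫_ℝ - L * t ^ 2 * ‖d‖ ^ 2 / 2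
    with hh
  have hhderiv : ∀ t : ℝ, HasDerivAt h
      (⟪f' (x + t • d), d⟫_ℝ - ⟪f' x, d⟫_ℝ - L * t * ‖d‖ ^ 2) t := by
    intro t
    have h1 : HasDerivAt (fun t : ℝ => t * ⟪f' x, d⟫_ℝ) ⟪f' x, d⟫_ℝ t := by
      simpa using (hasDerivAt_id t).mul_const ⟪f' x, d⟫_ℝ
    have h2 : HasDerivAt (fun t : ℝ => L * t ^ 2 * ‖d‖ ^ 2 / 2) (L * t * ‖d‖ ^ 2) t := by
      have := ((hasDerivAt_pow 2 t).const_mul L).mul_const (‖d‖ ^ 2) |>.div_const 2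
      exact this.congr_deriv (by norm_num; ring)
    exact ((hderiv t).sub h1).sub h2
  have key : h 1 ≤ h 0 := by
    have hanti : AntitoneOn h (Set.Icc 0 1) := by
      apply antitoneOn_of_deriv_nonpos (convex_Icc 0 1)
      · exact fun t _ => ((hhderiv t).continuousAt).continuousWithinAt
      · exact fun t _ => (hhderiv t).differentiableAt.differentiableWithinAt
      · intro t ht
        rw [interior_Icc] at ht
        rw [(hhderiv t).deriv]
        have hCS : ⟪f' (x + t • d) - f' x, d⟫_ℝ ≤ ‖f' (x + t • d) - f' x‖ * ‖d‖ :=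
          real_inner_le_norm _ _
        have hlip := hLip (x + t • d) x
        have hnorm : ‖x + t • d - x‖ = t * ‖d‖ := by
          rw [add_sub_cancel_left, norm_smul, Real.norm_eq_abs, abs_of_pos ht.1]
        rw [hnorm] at hlip
        have : ⟪f' (x + t • d), d⟫_ℝ - ⟪f' x, d⟫_ℝ ≤ L * t * ‖d‖ ^ 2 := by
          rw [← inner_sub_left]
          calc ⟪f' (x + t • d) - f' x, d⟫_ℝ ≤ ‖f' (x + t • d) - f' x‖ * ‖d‖ := hCS
            _ ≤ (L * (t * ‖d‖)) * ‖d‖ := by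
                apply mul_le_mul_of_nonneg_right hlip (norm_nonneg d)
            _ = L * t * ‖d‖ ^ 2 := by ring
        linarith
    exact hanti (Set.mem_Icc.2 ⟨le_refl 0, zero_le_one⟩)
      (Set.mem_Icc.2 ⟨zero_le_one, le_refl 1⟩) zero_le_one
  have e1 : h 1 = f v - ⟪f' x, d⟫_ℝ - L * ‖d‖ ^ 2 / 2 := by
    simp [hh, hd]
  have e0 : h 0 = f x := by simp [hh]
  rw [e1, e0] at key
  linarith


/-- Sufficient decrease of a proximal gradient step: if `f` has an `L`-Lipschitz
gradient, `g` is convex, `δ ∈ (0, 1/L)` and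
`v = prox_{δg}(x − δ∇f(x))`, then
`(f+g)(x) − (f+g)(v) ≥ (1/(2δ) − L/2)‖v − x‖²`. -/
theorem prox_grad_sufficient_decrease {n : ℕ}
    (f g : EuclideanSpace ℝ (Fin n) → ℝ)
    (f' : EuclideanSpace ℝ (Fin n) → EuclideanSpace ℝ (Fin n))
    (hf : ∀ x, HasGradientAt f (f' x) x)
    (L : ℝ) (hL : 0 < L) (hLip : ∀ a b, ‖f' a - f' b‖ ≤ L * ‖a - b‖)
    (hg : ConvexOn ℝ Set.univ g)
    (δ : ℝ) (hδ0 : 0 < δ) (hδL : δ < 1 / L)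
    (x v : EuclideanSpace ℝ (Fin n))
    (hv : IsMinOn (fun u => g u + 1 / (2 * δ) * ‖(x - δ • f' x) - u‖ ^ 2)
      Set.univ v) :
    (f x + g x) - (f v + g v) ≥ (1 / (2 * δ) - L / 2) * ‖v - x‖ ^ 2 := by
  have hdesc := descent_lemma' f f' hf L hL hLip x v
  -- prox inequality at u = x
  have hprox : g v + 1 / (2 * δ) * ‖(x - δ • f' x) - v‖ ^ 2
      ≤ g x + 1 / (2 * δ) * ‖(x - δ • f' x) - x‖ ^ 2 := hv (Set.mem_univ x)
  have e1 : ‖(x - δ • f' x) - x‖ ^ 2 = δ ^ 2 * ‖f' x‖ ^ 2 := by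
    rw [sub_sub_cancel_left, norm_neg, norm_smul, Real.norm_eq_abs, mul_pow,
      sq_abs]
  have e2 : ‖(x - δ • f' x) - v‖ ^ 2
      = ‖x - v‖ ^ 2 - 2 * ⟪x - v, δ • f' x⟫_ℝ + δ ^ 2 * ‖f' x‖ ^ 2 := by
    have : (x - δ • f' x) - v = (x - v) - δ • f' x := by abel
    rw [this, ← real_inner_self_eq_norm_sq, ← real_inner_self_eq_norm_sq,
      ← real_inner_self_eq_norm_sq, inner_sub_sub_self]
    have : ⟪δ • f' x, δ • f' x⟫_ℝ = δ ^ 2 * ⟪f' x, f' x⟫_ℝ := by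
      rw [real_inner_smul_left, real_inner_smul_right]; ring
    rw [this, real_inner_comm (δ • f' x) (x - v)]; ring
  rw [e1, e2] at hprox
  have hgv : g v ≤ g x + ⟪x - v, f' x⟫_ℝ - 1 / (2 * δ) * ‖x - v‖ ^ 2 := by
    have hinner : ⟪x - v, δ • f' x⟫_ℝ = δ * ⟪x - v, f' x⟫_ℝ :=
      real_inner_smul_right _ _ _
    rw [hinner] at hprox
    have hδ' : (1 : ℝ) / (2 * δ) * (2 * δ) = 1 := by
      field_simp
    nlinarith [hprox, sq_nonneg ‖x - v‖, hδ0]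
  have hsym : ⟪x - v, f' x⟫_ℝ = - ⟪f' x, v - x⟫_ℝ := by
    rw [← neg_sub v x, inner_neg_left, real_inner_comm]
  have hnorm : ‖x - v‖ = ‖v - x‖ := norm_sub_rev x v
  rw [hsym, hnorm] at hgv
  linarith
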